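/- For every F ∈ L²([−π, π]) and f(z) = (1/2π) ∫_{−π}^{π} F(t) e^{−izt} dt, one has lim_{|z| → ∞} |f(z)| / √(K(z, z̄)) = 0, where for z = x + iy, K(z, z̄) = (e^{2πy} − e^{−2πy})/(4πy), interpreted as 1 when y = 0. -/

import Mathlib

open MeasureTheory

/-- The Paley–Wiener transform `f(z) = (1/2π) ∫_{−π}^{π} F(t) e^{−izt} dt`. -/
noncomputable def pwTransform (F : ℝ → ℂ) (z : ℂ) : ℂ :=
  (1 / (2 * Real.pi) : ℝ) •
    ∫ t in Set.Icc (-Real.pi) Real.pi, F t * Complex.exp (-Complex.I * z * t)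

/-- The diagonal of the Paley–Wiener reproducing kernel:
`K(z, z̄) = (e^{2πy} − e^{−2πy})/(4πy)` for `z = x + iy`, interpreted as `1` when `y = 0`. -/
noncomputable def pwKernelDiag (y : ℝ) : ℝ :=
  if y = 0 then 1
  else (Real.exp (2 * Real.pi * y) - Real.exp (-(2 * Real.pi * y))) / (4 * Real.pi * y)

open Real Filter Set



lemma pwK_abs {y : ℝ} (hy : y ≠ 0) :
    pwKernelDiag y = (Real.exp (2 * Real.pi * |y|) - Real.exp (-(2 * Real.pi * |y|))) / (4 * Real.pi * |y|) := by
  rcases abs_cases y with ⟨h, _⟩ | ⟨h, hneg⟩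
  · rw [pwKernelDiag, if_neg hy, h]
  · rw [pwKernelDiag, if_neg hy, h]
    rw [show 2 * Real.pi * -y = -(2 * Real.pi * y) by ring, neg_neg]
    rw [show 4 * Real.pi * -y = -(4 * Real.pi * y) by ring]
    rw [div_neg, ← neg_div, neg_sub]

lemma pwK_one_le (y : ℝ) : 1 ≤ pwKernelDiag y := by
  rcases eq_or_ne y 0 with h | h
  · simp [pwKernelDiag, h]
  · rw [pwK_abs h]
    have hy : 0 < |y| := abs_pos.2 h
    have hu : 0 < 2 * Real.pi * |y| := by positivity
    have := Real.self_lt_sinh_iff.2 hu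
    rw [Real.sinh_eq] at this
    rw [one_le_div (by positivity)]
    nlinarith
lemma pwK_pos (y : ℝ) : 0 < pwKernelDiag y := lt_of_lt_of_le one_pos (pwK_one_le y)

lemma pwK_sqrt_one_le (y : ℝ) : 1 ≤ Real.sqrt (pwKernelDiag y) := by
  rw [show (1:ℝ) = Real.sqrt 1 by simp]
  exact Real.sqrt_le_sqrt (pwK_one_le y)

lemma pwK_lower {y : ℝ} (hy : 1 ≤ |y|) :
    Real.exp (2 * Real.pi * |y|) / (8 * Real.pi * |y|) ≤ pwKernelDiag y := by
  have h : y ≠ 0 := by intro h; simp [h] at hy; linarith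
  rw [pwK_abs h]
  have hy0 : 0 < |y| := by linarith
  rw [div_le_div_iff₀ (by positivity) (by positivity)]
  have h1 : (2:ℝ) ≤ Real.exp (2 * Real.pi * |y|) := by
    calc (2:ℝ) ≤ Real.exp 1 := by
          have := Real.add_one_le_exp 1; linarith
      _ ≤ Real.exp (2 * Real.pi * |y|) := by
          apply Real.exp_le_exp.2; nlinarith [Real.pi_gt_three]
  have h2 : Real.exp (-(2 * Real.pi * |y|)) ≤ 1 := Real.exp_le_one_iff.2 (by nlinarith [Real.pi_pos])
  have h3 : 2 * Real.exp (-(2 * Real.pi * |y|)) ≤ Real.exp (2 * Real.pi * |y|) := by linarith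
  nlinarith [mul_pos Real.pi_pos hy0, h3]

lemma pwK_integral (y : ℝ) :
    ∫ t in Icc (-Real.pi) Real.pi, Real.exp (2 * y * t) = 2 * Real.pi * pwKernelDiag y := by
  rw [MeasureTheory.integral_Icc_eq_integral_Ioc,
    ← intervalIntegral.integral_of_le (by linarith [Real.pi_pos] : -Real.pi ≤ Real.pi)]
  rcases eq_or_ne y 0 with h | h
  · simp [h, pwKernelDiag, two_mul]
  · have hc : 2 * y ≠ 0 := by simp [h]
    rw [intervalIntegral.integral_comp_mul_left Real.exp hc, integral_exp]
    rw [pwKernelDiag, if_neg h]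
    field_simp
    ring_nf
    field_simp


lemma exp_le_on_Icc {y t : ℝ} (ht : t ∈ Icc (-Real.pi) Real.pi) :
    Real.exp (y * t) ≤ Real.exp (|y| * Real.pi) := by
  apply Real.exp_le_exp.2
  calc y * t ≤ |y * t| := le_abs_self _
    _ = |y| * |t| := abs_mul _ _
    _ ≤ |y| * Real.pi := by
        apply mul_le_mul_of_nonneg_left _ (abs_nonneg y)
        exact abs_le.2 ⟨ht.1, ht.2⟩

lemma holder_tail (G : ℝ → ℂ)
    (hG : MemLp G 2 (volume.restrict (Set.Icc (-Real.pi) Real.pi)))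
    {s : Set ℝ} (hs : MeasurableSet s) (hsub : s ⊆ Icc (-Real.pi) Real.pi) (y : ℝ) :
    ∫ t in s, ‖G t‖ * Real.exp (y * t) ≤
      Real.sqrt (∫ t in s, ‖G t‖ ^ 2) *
        Real.sqrt (∫ t in Icc (-Real.pi) Real.pi, Real.exp (2 * y * t)) := by
  have hres : volume.restrict s ≤ volume.restrict (Icc (-Real.pi) Real.pi) :=
    Measure.restrict_mono hsub le_rfl
  have hGs : MemLp (fun t => ‖G t‖) (ENNReal.ofReal 2) (volume.restrict s) := by
    rw [show ENNReal.ofReal 2 = 2 by norm_num]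
    exact (hG.norm).mono_measure hres
  haveI : IsFiniteMeasure (volume.restrict s) :=
    ⟨by rw [Measure.restrict_apply_univ]
        exact lt_of_le_of_lt (measure_mono hsub) measure_Icc_lt_top⟩
  have hexp : MemLp (fun t => Real.exp (y * t)) (ENNReal.ofReal 2) (volume.restrict s) := by
    apply MemLp.mono_exponent (q := ⊤) _ le_top
    apply memLp_top_of_bound ((Real.continuous_exp.comp (continuous_const.mul continuous_id)).aestronglyMeasurable) (Real.exp (|y| * Real.pi))
    filter_upwards [ae_restrict_mem hs] with t ht
    simp only [Function.comp, id]
    rw [Real.norm_eq_abs, abs_of_pos (Real.exp_pos _)]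
    exact exp_le_on_Icc (hsub ht)
  have hconj : Real.HolderConjugate 2 2 := Real.holderConjugate_iff.2 ⟨one_lt_two, by norm_num⟩
  have H := MeasureTheory.integral_mul_le_Lp_mul_Lq_of_nonneg hconj
    (Filter.Eventually.of_forall fun t => norm_nonneg (G t))
    (Filter.Eventually.of_forall fun t => (Real.exp_pos (y * t)).le) hGs hexp
  simp only [Real.rpow_two] at H
  calc ∫ t in s, ‖G t‖ * Real.exp (y * t)
      ≤ (∫ t in s, ‖G t‖ ^ 2) ^ (1/(2:ℝ)) * (∫ t in s, (Real.exp (y * t)) ^ 2) ^ (1/(2:ℝ)) := H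
    _ = Real.sqrt (∫ t in s, ‖G t‖ ^ 2) * Real.sqrt (∫ t in s, (Real.exp (y * t)) ^ 2) := by
        rw [← Real.sqrt_eq_rpow, ← Real.sqrt_eq_rpow]
    _ ≤ Real.sqrt (∫ t in s, ‖G t‖ ^ 2) *
        Real.sqrt (∫ t in Icc (-Real.pi) Real.pi, Real.exp (2 * y * t)) := by
        apply mul_le_mul_of_nonneg_left _ (Real.sqrt_nonneg _)
        apply Real.sqrt_le_sqrt
        have : ∀ t : ℝ, (Real.exp (y * t)) ^ 2 = Real.exp (2 * y * t) := by
          intro t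
          rw [← Real.exp_nat_mul]
          norm_num; ring_nf
        simp only [this]
        apply setIntegral_mono_set
        · exact (Real.continuous_exp.comp (continuous_const.mul continuous_id)).integrableOn_Icc
        · exact Filter.Eventually.of_forall fun t => (Real.exp_pos _).le
        · exact HasSubset.Subset.eventuallyLE hsub


lemma integrand_integrable {F : ℝ → ℂ} (hFi : IntegrableOn F (Icc (-Real.pi) Real.pi))
    (w : ℂ) : IntegrableOn (fun t : ℝ => F t * Complex.exp (w * t)) (Icc (-Real.pi) Real.pi) := by
  have h1 : IntegrableOn (fun t : ℝ => Complex.exp (w * t) * F t) (Icc (-Real.pi) Real.pi) := by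
    apply hFi.bdd_mul (c := Real.exp (|w.re| * Real.pi))
    · exact (Complex.continuous_exp.comp (continuous_const.mul Complex.continuous_ofReal)).aestronglyMeasurable
    · filter_upwards [ae_restrict_mem measurableSet_Icc] with t ht
      rw [Complex.norm_exp]
      apply Real.exp_le_exp.2
      have : (w * (t:ℂ)).re = w.re * t := by simp [Complex.mul_re]
      rw [this]
      calc w.re * t ≤ |w.re * t| := le_abs_self _
        _ = |w.re| * |t| := abs_mul _ _
        _ ≤ |w.re| * Real.pi := by
            exact mul_le_mul_of_nonneg_left (abs_le.2 ⟨ht.1, ht.2⟩) (abs_nonneg _)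
  exact h1.congr_fun (fun t _ => mul_comm _ _) measurableSet_Icc

lemma rl_step {F : ℝ → ℂ} (hFi : IntegrableOn F (Icc (-Real.pi) Real.pi)) (y₀ : ℝ) :
    Tendsto (fun x : ℝ => ∫ t in Icc (-Real.pi) Real.pi,
        F t * Complex.exp (((y₀ : ℂ) - Complex.I * x) * t)) (cocompact ℝ) (nhds 0) := by
  set g : ℝ → ℂ := (Icc (-Real.pi) Real.pi).indicator (fun t => F t * Complex.exp ((y₀ : ℂ) * t))
  have hdiv : Tendsto (fun x : ℝ => x / (2 * Real.pi)) (cocompact ℝ) (cocompact ℝ) := by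
    rw [cocompact_eq_atBot_atTop]
    rw [Filter.tendsto_sup]
    constructor
    · exact (tendsto_id.atBot_div_const (by positivity)).mono_right le_sup_left
    · exact (tendsto_id.atTop_div_const (by positivity)).mono_right le_sup_right
  have RL := (Real.tendsto_integral_exp_smul_cocompact g).comp hdiv
  have heq : ∀ x : ℝ, (∫ v : ℝ, Real.fourierChar (-(v * (x / (2 * Real.pi)))) • g v) =
      ∫ t in Icc (-Real.pi) Real.pi, F t * Complex.exp (((y₀ : ℂ) - Complex.I * x) * t) := by
    intro x
    rw [← integral_indicator measurableSet_Icc]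
    congr 1
    funext v
    simp only [g, Set.indicator_apply]
    by_cases hv : v ∈ Icc (-Real.pi) Real.pi
    · simp only [hv, if_true]
      rw [Circle.smul_def, Real.fourierChar_apply]
      have : 2 * Real.pi * -(v * (x / (2 * Real.pi))) = -(v * x) := by
        field_simp
      rw [this]
      rw [show ((y₀:ℂ) - Complex.I * x) * v = (y₀:ℂ) * v + (-(v*x) : ℝ) * Complex.I by
        push_cast; ring]
      rw [Complex.exp_add]
      rw [smul_eq_mul]
      ring
    · simp [hv]
  rw [show (fun x : ℝ => ∫ t in Icc (-Real.pi) Real.pi,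
      F t * Complex.exp (((y₀ : ℂ) - Complex.I * x) * t)) = fun x =>
      (∫ v : ℝ, Real.fourierChar (-(v * (x / (2 * Real.pi)))) • g v) from funext fun x => (heq x).symm]
  exact RL

lemma exp_sub_exp_le (a b : ℝ) : |Real.exp a - Real.exp b| ≤ |a - b| * Real.exp (max a b) := by
  wlog h : b ≤ a with H
  · rw [abs_sub_comm, abs_sub_comm a b, max_comm]
    exact H b a (le_of_not_ge h)
  have key : Real.exp (a - b) * Real.exp (b - a) = 1 := by
    rw [← Real.exp_add]; simp
  have h1 : Real.exp (a - b) - 1 ≤ (a - b) * Real.exp (a - b) := by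
    nlinarith [Real.add_one_le_exp (b - a), Real.exp_pos (a - b)]
  rw [max_eq_left h, abs_of_nonneg (by linarith : (0:ℝ) ≤ a - b),
    abs_of_nonneg (sub_nonneg.2 (Real.exp_le_exp.2 h))]
  have h2 : Real.exp a = Real.exp (a - b) * Real.exp b := by rw [← Real.exp_add]; ring_nf
  nlinarith [Real.exp_pos b, Real.exp_pos (a-b)]

lemma lip_step {F : ℝ → ℂ} (hFi : IntegrableOn F (Icc (-Real.pi) Real.pi))
    {Y' : ℝ} (hY' : 0 ≤ Y') {y y₀ : ℝ} (hy : |y| ≤ Y') (hy₀ : |y₀| ≤ Y') (x : ℝ) :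
    ‖(∫ t in Icc (-Real.pi) Real.pi, F t * Complex.exp (((y : ℂ) - Complex.I * x) * t)) -
      ∫ t in Icc (-Real.pi) Real.pi, F t * Complex.exp (((y₀ : ℂ) - Complex.I * x) * t)‖ ≤
      ((∫ t in Icc (-Real.pi) Real.pi, ‖F t‖) * (Real.pi * Real.exp (Y' * Real.pi))) * |y - y₀| := by
  have hi1 := integrand_integrable hFi ((y : ℂ) - Complex.I * x)
  have hi2 := integrand_integrable hFi ((y₀ : ℂ) - Complex.I * x)
  rw [← integral_sub hi1 hi2]
  have hbound : ∀ t ∈ Icc (-Real.pi) Real.pi,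
      ‖F t * Complex.exp (((y : ℂ) - Complex.I * x) * t) -
        F t * Complex.exp (((y₀ : ℂ) - Complex.I * x) * t)‖ ≤
      ‖F t‖ * (Real.pi * Real.exp (Y' * Real.pi) * |y - y₀|) := by
    intro t ht
    rw [← mul_sub, norm_mul]
    apply mul_le_mul_of_nonneg_left _ (norm_nonneg _)
    have e1 : ((y : ℂ) - Complex.I * x) * t = (↑(y * t) : ℂ) + ↑(-(t * x)) * Complex.I := by
      push_cast; ring
    have e2 : ((y₀ : ℂ) - Complex.I * x) * t = (↑(y₀ * t) : ℂ) + ↑(-(t * x)) * Complex.I := by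
      push_cast; ring
    rw [e1, e2, Complex.exp_add, Complex.exp_add, ← sub_mul, norm_mul]
    have habs1 : ‖Complex.exp ((↑(-(t * x)) : ℂ) * Complex.I)‖ = 1 := by
      rw [Complex.norm_exp]
      simp
    rw [habs1, mul_one]
    have : (Complex.exp (↑(y * t)) - Complex.exp (↑(y₀ * t))) =
        ((Real.exp (y * t) - Real.exp (y₀ * t) : ℝ) : ℂ) := by
      push_cast [Complex.ofReal_exp]
      norm_num
    rw [this, Complex.norm_real, Real.norm_eq_abs]
    have ht' : |t| ≤ Real.pi := abs_le.2 ⟨ht.1, ht.2⟩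
    calc |Real.exp (y * t) - Real.exp (y₀ * t)|
        ≤ |y * t - y₀ * t| * Real.exp (max (y * t) (y₀ * t)) := exp_sub_exp_le _ _
      _ ≤ (|y - y₀| * Real.pi) * Real.exp (Y' * Real.pi) := by
          apply mul_le_mul
          · rw [← sub_mul, abs_mul]
            exact mul_le_mul_of_nonneg_left ht' (abs_nonneg _)
          · apply Real.exp_le_exp.2
            rcases max_cases (y * t) (y₀ * t) with ⟨h, _⟩ | ⟨h, _⟩ <;> rw [h]
            · calc y * t ≤ |y * t| := le_abs_self _
                _ = |y| * |t| := abs_mul _ _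
                _ ≤ Y' * Real.pi := mul_le_mul hy ht' (abs_nonneg _) hY'
            · calc y₀ * t ≤ |y₀ * t| := le_abs_self _
                _ = |y₀| * |t| := abs_mul _ _
                _ ≤ Y' * Real.pi := mul_le_mul hy₀ ht' (abs_nonneg _) hY'
          · positivity
          · positivity
      _ = Real.pi * Real.exp (Y' * Real.pi) * |y - y₀| := by ring
  calc ‖∫ t in Icc (-Real.pi) Real.pi,
        (F t * Complex.exp (((y : ℂ) - Complex.I * x) * t) -
         F t * Complex.exp (((y₀ : ℂ) - Complex.I * x) * t))‖
      ≤ ∫ t in Icc (-Real.pi) Real.pi,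
          ‖F t‖ * (Real.pi * Real.exp (Y' * Real.pi) * |y - y₀|) := by
        apply norm_integral_le_of_norm_le
        · exact (hFi.norm.mul_const _)
        · filter_upwards [ae_restrict_mem measurableSet_Icc] with t ht
          exact hbound t ht
    _ = ((∫ t in Icc (-Real.pi) Real.pi, ‖F t‖) * (Real.pi * Real.exp (Y' * Real.pi))) * |y - y₀| := by
        rw [integral_mul_const]; ring

lemma grid_lemma {F : ℝ → ℂ} (hFi : IntegrableOn F (Icc (-Real.pi) Real.pi))
    (Y : ℝ) (hY : 0 < Y) {ε : ℝ} (hε : 0 < ε) :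
    ∃ R : ℝ, ∀ x y : ℝ, R ≤ |x| → |y| ≤ Y →
      ‖∫ t in Icc (-Real.pi) Real.pi, F t * Complex.exp (((y : ℂ) - Complex.I * x) * t)‖ < ε := by
  set M₁ : ℝ := ∫ t in Icc (-Real.pi) Real.pi, ‖F t‖ with hM₁
  have hM₁0 : 0 ≤ M₁ := integral_nonneg fun t => norm_nonneg _
  set C : ℝ := M₁ * (Real.pi * Real.exp ((Y + 1) * Real.pi)) + 1 with hC
  have hC1 : 1 ≤ C := by
    have : 0 ≤ M₁ * (Real.pi * Real.exp ((Y + 1) * Real.pi)) := by positivity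
    linarith
  have hC0 : 0 < C := by linarith
  set δ : ℝ := min 1 (ε / (2 * C)) with hδdef
  have hδ0 : 0 < δ := lt_min one_pos (by positivity)
  have hδ1 : δ ≤ 1 := min_le_left _ _
  have hδ2 : δ ≤ ε / (2 * C) := min_le_right _ _
  -- finite subcover of [-Y, Y] by balls of radius δ
  obtain ⟨s, hs⟩ := (isCompact_Icc (a := -Y) (b := Y)).elim_finite_subcover
    (fun y₀ : ℝ => Metric.ball y₀ δ) (fun _ => Metric.isOpen_ball)
    (fun y hy => Set.mem_iUnion.2 ⟨y, Metric.mem_ball_self hδ0⟩)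
  -- Riemann-Lebesgue at each center, eventually small
  have hRL : ∀ᶠ x : ℝ in cocompact ℝ, ∀ y₀ ∈ s,
      ‖∫ t in Icc (-Real.pi) Real.pi, F t * Complex.exp (((y₀ : ℂ) - Complex.I * x) * t)‖ < ε / 2 := by
    rw [eventually_all_finset]
    intro y₀ _
    have := rl_step hFi y₀
    have h2 := this.norm
    rw [norm_zero] at h2
    exact h2.eventually (Filter.Tendsto.eventually_lt_const (by positivity) tendsto_id)
      |>.mono (fun x hx => hx)
  rw [cocompact_eq_atBot_atTop, eventually_sup, eventually_atBot, eventually_atTop] at hRL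
  obtain ⟨⟨a, ha⟩, ⟨b, hb⟩⟩ := hRL
  refine ⟨max (|a| + 1) (|b| + 1), fun x y hx hy => ?_⟩
  -- the small bound at nearby center
  have hxsmall : ∀ y₀ ∈ s,
      ‖∫ t in Icc (-Real.pi) Real.pi, F t * Complex.exp (((y₀ : ℂ) - Complex.I * x) * t)‖ < ε / 2 := by
    rcases abs_cases x with ⟨hxx, _⟩ | ⟨hxx, _⟩
    · apply hb
      have : |b| + 1 ≤ |x| := le_trans (le_max_right _ _) hx
      rw [hxx] at this
      linarith [le_abs_self b]
    · apply ha
      have : |a| + 1 ≤ |x| := le_trans (le_max_left _ _) hx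
      rw [hxx] at this
      linarith [neg_abs_le a]
  -- pick a nearby center
  have hymem : y ∈ Icc (-Y) Y := abs_le.1 hy
  obtain ⟨y₀, hy₀s, hy₀ball⟩ := Set.mem_iUnion₂.1 (hs hymem)
  have hdist : |y - y₀| < δ := by
    rw [Metric.mem_ball, Real.dist_eq] at hy₀ball
    exact hy₀ball
  have hy₀abs : |y₀| ≤ Y + 1 := by
    have : |y - y₀| ≤ 1 := le_trans hdist.le hδ1
    have := abs_sub_abs_le_abs_sub y₀ y
    rw [abs_sub_comm y₀ y] at this
    linarith
  have hyabs : |y| ≤ Y + 1 := by linarith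
  have hlip := lip_step hFi (by linarith : (0:ℝ) ≤ Y + 1) hyabs hy₀abs x
  calc ‖∫ t in Icc (-Real.pi) Real.pi, F t * Complex.exp (((y : ℂ) - Complex.I * x) * t)‖
      ≤ ‖(∫ t in Icc (-Real.pi) Real.pi, F t * Complex.exp (((y : ℂ) - Complex.I * x) * t)) -
          ∫ t in Icc (-Real.pi) Real.pi, F t * Complex.exp (((y₀ : ℂ) - Complex.I * x) * t)‖ +
        ‖∫ t in Icc (-Real.pi) Real.pi, F t * Complex.exp (((y₀ : ℂ) - Complex.I * x) * t)‖ := by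
        conv_lhs => rw [show (∫ t in Icc (-Real.pi) Real.pi,
            F t * Complex.exp (((y : ℂ) - Complex.I * x) * t)) =
          ((∫ t in Icc (-Real.pi) Real.pi, F t * Complex.exp (((y : ℂ) - Complex.I * x) * t)) -
            (∫ t in Icc (-Real.pi) Real.pi, F t * Complex.exp (((y₀ : ℂ) - Complex.I * x) * t))) +
            ∫ t in Icc (-Real.pi) Real.pi, F t * Complex.exp (((y₀ : ℂ) - Complex.I * x) * t) by ring]
        exact norm_add_le _ _
    _ < ε / 2 + ε / 2 := by
        apply add_lt_add_of_le_of_lt (le_trans hlip _) (hxsmall y₀ hy₀s)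
        calc (M₁ * (Real.pi * Real.exp ((Y + 1) * Real.pi))) * |y - y₀|
            ≤ C * |y - y₀| := by
              apply mul_le_mul_of_nonneg_right _ (abs_nonneg _)
              rw [hC]; linarith
          _ ≤ C * δ := mul_le_mul_of_nonneg_left hdist.le hC0.le
          _ ≤ C * (ε / (2 * C)) := mul_le_mul_of_nonneg_left hδ2 hC0.le
          _ = ε / 2 := by field_simp
    _ = ε := by ring





lemma tendsto_aux {c δ : ℝ} (hc : 0 ≤ c) (hδ : 0 < δ) :
    Tendsto (fun u : ℝ => c * Real.sqrt (8 * Real.pi * u) * Real.exp (-(δ * u)))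
      atTop (nhds 0) := by
  have base : Tendsto (fun v : ℝ => v * Real.exp (-v)) atTop (nhds 0) := by
    have := tendsto_pow_mul_exp_neg_atTop_nhds_zero 1
    simpa using this
  have comp : Tendsto (fun u : ℝ => (δ * u) * Real.exp (-(δ * u))) atTop (nhds 0) :=
    base.comp (Tendsto.const_mul_atTop hδ tendsto_id)
  have big : Tendsto (fun u : ℝ => (c * 8 * Real.pi / δ) * ((δ * u) * Real.exp (-(δ * u))))
      atTop (nhds 0) := by
    simpa using comp.const_mul (c * 8 * Real.pi / δ)
  apply squeeze_zero' (g := fun u : ℝ => (c * 8 * Real.pi / δ) * ((δ * u) * Real.exp (-(δ * u))))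
  · filter_upwards with u
    positivity
  · filter_upwards [eventually_ge_atTop (1 : ℝ)] with u hu
    have h8 : (1:ℝ) ≤ 8 * Real.pi * u := by nlinarith [Real.pi_gt_three]
    have hsqrt : Real.sqrt (8 * Real.pi * u) ≤ 8 * Real.pi * u :=
      (Real.sqrt_le_left (by positivity)).2 (by nlinarith)
    calc c * Real.sqrt (8 * Real.pi * u) * Real.exp (-(δ * u))
        ≤ c * (8 * Real.pi * u) * Real.exp (-(δ * u)) := by
          apply mul_le_mul_of_nonneg_right _ (Real.exp_pos _).le
          exact mul_le_mul_of_nonneg_left hsqrt hc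
      _ = (c * 8 * Real.pi / δ) * ((δ * u) * Real.exp (-(δ * u))) := by
          field_simp
  · exact big

lemma choose_delta {F : ℝ → ℂ}
    (hF : MemLp F 2 (volume.restrict (Set.Icc (-Real.pi) Real.pi)))
    {η : ℝ} (hη : 0 < η) :
    ∃ δ : ℝ, 0 < δ ∧ δ < Real.pi ∧
      (∫ t in Icc (-Real.pi) Real.pi \ Icc (-Real.pi + δ) (Real.pi - δ), ‖F t‖ ^ 2) < η := by
  have hsq : Integrable (fun t => ‖F t‖ ^ 2) (volume.restrict (Icc (-Real.pi) Real.pi)) := by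
    have := hF.integrable_norm_rpow two_ne_zero ENNReal.ofNat_ne_top
    simpa [ENNReal.toReal_ofNat, Real.rpow_two] using this
  set s : ℕ → Set ℝ := fun n =>
    Icc (-Real.pi) Real.pi \ Icc (-Real.pi + Real.pi / (n + 1)) (Real.pi - Real.pi / (n + 1))
    with hs_def
  have hsm : ∀ n, MeasurableSet (s n) := fun n => measurableSet_Icc.diff measurableSet_Icc
  have hμ : ∀ n : ℕ, (volume.restrict (Icc (-Real.pi) Real.pi)) (s n) ≤
      ENNReal.ofReal (2 * Real.pi / ((n : ℝ) + 1)) := by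
    intro n
    set d : ℝ := Real.pi / ((n : ℝ) + 1) with hd
    have hd0 : 0 < d := by positivity
    have hsubset : s n ⊆ Icc (-Real.pi) (-Real.pi + d) ∪ Icc (Real.pi - d) Real.pi := by
      intro t ⟨ht1, ht2⟩
      simp only [Set.mem_Icc, not_and, not_le] at ht2
      rcases le_or_gt (-Real.pi + d) t with h | h
      · exact Or.inr ⟨(ht2 h).le, ht1.2⟩
      · exact Or.inl ⟨ht1.1, h.le⟩
    calc (volume.restrict (Icc (-Real.pi) Real.pi)) (s n)
        ≤ volume (s n) := Measure.restrict_le_self _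
      _ ≤ volume (Icc (-Real.pi) (-Real.pi + d) ∪ Icc (Real.pi - d) Real.pi) :=
          measure_mono hsubset
      _ ≤ volume (Icc (-Real.pi) (-Real.pi + d)) + volume (Icc (Real.pi - d) Real.pi) :=
          measure_union_le _ _
      _ = ENNReal.ofReal d + ENNReal.ofReal d := by
          rw [Real.volume_Icc, Real.volume_Icc]
          congr 1 <;> congr 1 <;> ring
      _ = ENNReal.ofReal (2 * Real.pi / ((n : ℝ) + 1)) := by
          rw [← ENNReal.ofReal_add hd0.le hd0.le]
          congr 1
          rw [hd]; ring
  have hμ0 : Tendsto (fun n : ℕ => (volume.restrict (Icc (-Real.pi) Real.pi)) (s n))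
      atTop (nhds 0) := by
    have hreal : Tendsto (fun n : ℕ => 2 * Real.pi / ((n : ℝ) + 1)) atTop (nhds 0) := by
      have h1 := (tendsto_const_div_atTop_nhds_zero_nat (2 * Real.pi)).comp
        (tendsto_add_atTop_nat 1)
      have h2 : (fun n : ℕ => 2 * Real.pi / ((n : ℝ) + 1)) =
          (fun n : ℕ => 2 * Real.pi / (n : ℝ)) ∘ (fun n => n + 1) := by
        funext n
        simp only [Function.comp]
        push_cast
        ring
      rw [h2]
      exact h1
    have htop : Tendsto (fun n : ℕ => ENNReal.ofReal (2 * Real.pi / ((n : ℝ) + 1)))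
        atTop (nhds 0) := by
      rw [show (0 : ENNReal) = ENNReal.ofReal 0 by simp]
      exact ENNReal.tendsto_ofReal hreal
    exact tendsto_of_tendsto_of_tendsto_of_le_of_le tendsto_const_nhds htop
      (fun n => zero_le) hμ
  have hint := hsq.tendsto_setIntegral_nhds_zero hμ0
  have hev : ∀ᶠ n : ℕ in atTop,
      (∫ t in s n, ‖F t‖ ^ 2 ∂(volume.restrict (Icc (-Real.pi) Real.pi))) < η :=
    hint.eventually (gt_mem_nhds hη)
  obtain ⟨N, hN⟩ := eventually_atTop.1 hev
  set n : ℕ := N + 1 with hn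
  refine ⟨Real.pi / ((n : ℝ) + 1), by positivity, ?_, ?_⟩
  · apply div_lt_self Real.pi_pos
    have : (1 : ℝ) ≤ (n : ℝ) := by exact_mod_cast Nat.one_le_iff_ne_zero.2 (by omega)
    linarith
  · have h3 := hN n (by omega)
    rw [Measure.restrict_restrict (hsm n)] at h3
    rwa [Set.inter_eq_self_of_subset_left Set.diff_subset] at h3



lemma norm_exp_integrable {F : ℝ → ℂ} (hFi : IntegrableOn F (Icc (-Real.pi) Real.pi)) (y : ℝ) :
    IntegrableOn (fun t => ‖F t‖ * Real.exp (y * t)) (Icc (-Real.pi) Real.pi) := by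
  have h1 : IntegrableOn (fun t : ℝ => Real.exp (y * t) * ‖F t‖) (Icc (-Real.pi) Real.pi) := by
    apply hFi.norm.bdd_mul (c := Real.exp (|y| * Real.pi))
    · exact (Real.continuous_exp.comp (continuous_const.mul continuous_id)).aestronglyMeasurable
    · filter_upwards [ae_restrict_mem measurableSet_Icc] with t ht
      rw [Real.norm_eq_abs, abs_of_pos (Real.exp_pos _)]
      apply Real.exp_le_exp.2
      calc y * t ≤ |y * t| := le_abs_self _
        _ = |y| * |t| := abs_mul _ _
        _ ≤ |y| * Real.pi := mul_le_mul_of_nonneg_left (abs_le.2 ⟨ht.1, ht.2⟩) (abs_nonneg _)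
  exact h1.congr_fun (fun t _ => mul_comm _ _) measurableSet_Icc

lemma largeY {F : ℝ → ℂ}
    (hF : MemLp F 2 (volume.restrict (Set.Icc (-Real.pi) Real.pi)))
    {ε : ℝ} (hε : 0 < ε) :
    ∃ Y : ℝ, 1 ≤ Y ∧ ∀ y : ℝ, Y ≤ |y| →
      (∫ t in Icc (-Real.pi) Real.pi, ‖F t‖ * Real.exp (y * t)) ≤
        ε * (2 * Real.pi) * Real.sqrt (pwKernelDiag y) := by
  have hFi : IntegrableOn F (Icc (-Real.pi) Real.pi) := hF.integrable one_le_two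
  set M₁ : ℝ := ∫ t in Icc (-Real.pi) Real.pi, ‖F t‖ with hM₁
  have hM₁0 : 0 ≤ M₁ := integral_nonneg fun t => norm_nonneg _
  -- choose δ
  have hη : 0 < (ε * Real.pi / Real.sqrt (2 * Real.pi)) ^ 2 := by
    have : 0 < Real.sqrt (2 * Real.pi) := Real.sqrt_pos.2 (by positivity)
    positivity
  obtain ⟨δ, hδ0, hδπ, hA⟩ := choose_delta hF hη
  set S : Set ℝ := Icc (-Real.pi) Real.pi \ Icc (-Real.pi + δ) (Real.pi - δ) with hS
  set mid : Set ℝ := Icc (-Real.pi + δ) (Real.pi - δ) with hmid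
  have hmid_sub : mid ⊆ Icc (-Real.pi) Real.pi := fun t ht =>
    ⟨by linarith [ht.1], by linarith [ht.2]⟩
  -- choose Y
  have htd := tendsto_aux hM₁0 hδ0
  have hev : ∀ᶠ u : ℝ in atTop,
      M₁ * Real.sqrt (8 * Real.pi * u) * Real.exp (-(δ * u)) < ε * Real.pi :=
    htd.eventually (gt_mem_nhds (by positivity))
  obtain ⟨Y₀, hY₀⟩ := eventually_atTop.1 hev
  refine ⟨max 1 Y₀, le_max_left _ _, fun y hy => ?_⟩
  set u : ℝ := |y| with hu
  have hu1 : 1 ≤ u := le_trans (le_max_left _ _) hy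
  have hu0 : 0 < u := by linarith
  have hKpos := pwK_pos y
  have hsqK : 0 < Real.sqrt (pwKernelDiag y) := Real.sqrt_pos.2 hKpos
  -- split integral
  have hIg := norm_exp_integrable hFi y
  have hsplit : (∫ t in Icc (-Real.pi) Real.pi, ‖F t‖ * Real.exp (y * t)) =
      (∫ t in S, ‖F t‖ * Real.exp (y * t)) + ∫ t in mid, ‖F t‖ * Real.exp (y * t) := by
    have := integral_diff (f := fun t => ‖F t‖ * Real.exp (y * t)) (μ := volume)
      measurableSet_Icc hIg hmid_sub
    rw [← hS] at this
    linarith [this]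
  -- tail estimate
  have htail : (∫ t in S, ‖F t‖ * Real.exp (y * t)) ≤
      ε * Real.pi * Real.sqrt (pwKernelDiag y) := by
    have h1 := holder_tail F hF (measurableSet_Icc.diff measurableSet_Icc :
      MeasurableSet S) Set.diff_subset y
    have h2 : Real.sqrt (∫ t in S, ‖F t‖ ^ 2) ≤ ε * Real.pi / Real.sqrt (2 * Real.pi) := by
      rw [show ε * Real.pi / Real.sqrt (2 * Real.pi) =
        Real.sqrt ((ε * Real.pi / Real.sqrt (2 * Real.pi)) ^ 2) from
        (Real.sqrt_sq (by positivity)).symm]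
      exact Real.sqrt_le_sqrt hA.le
    have h3 : Real.sqrt (∫ t in Icc (-Real.pi) Real.pi, Real.exp (2 * y * t)) =
        Real.sqrt (2 * Real.pi) * Real.sqrt (pwKernelDiag y) := by
      rw [pwK_integral y, Real.sqrt_mul (by positivity)]
    calc (∫ t in S, ‖F t‖ * Real.exp (y * t))
        ≤ Real.sqrt (∫ t in S, ‖F t‖ ^ 2) *
            Real.sqrt (∫ t in Icc (-Real.pi) Real.pi, Real.exp (2 * y * t)) := h1
      _ ≤ (ε * Real.pi / Real.sqrt (2 * Real.pi)) *
            (Real.sqrt (2 * Real.pi) * Real.sqrt (pwKernelDiag y)) := by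
          rw [h3]
          apply mul_le_mul_of_nonneg_right h2 (by positivity)
      _ = ε * Real.pi * Real.sqrt (pwKernelDiag y) := by
          have : Real.sqrt (2 * Real.pi) ≠ 0 := by positivity
          field_simp
  -- mid estimate
  have hmid_est : (∫ t in mid, ‖F t‖ * Real.exp (y * t)) ≤
      ε * Real.pi * Real.sqrt (pwKernelDiag y) := by
    have hstep1 : (∫ t in mid, ‖F t‖ * Real.exp (y * t)) ≤
        ∫ t in mid, ‖F t‖ * Real.exp (u * (Real.pi - δ)) := by
      have hFn : IntegrableOn (fun t => ‖F t‖) (Icc (-Real.pi) Real.pi) := hFi.norm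
      apply setIntegral_mono_on (hIg.mono_set hmid_sub)
        ((hFn.mono_set hmid_sub).mul_const _) measurableSet_Icc
      intro t ht
      apply mul_le_mul_of_nonneg_left _ (norm_nonneg _)
      apply Real.exp_le_exp.2
      have ht' : |t| ≤ Real.pi - δ := abs_le.2 ⟨by linarith [ht.1], ht.2⟩
      calc y * t ≤ |y * t| := le_abs_self _
        _ = u * |t| := abs_mul _ _
        _ ≤ u * (Real.pi - δ) := mul_le_mul_of_nonneg_left ht' hu0.le
    have hstep2 : (∫ t in mid, ‖F t‖ * Real.exp (u * (Real.pi - δ))) ≤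
        M₁ * Real.exp (u * (Real.pi - δ)) := by
      rw [integral_mul_const]
      apply mul_le_mul_of_nonneg_right _ (Real.exp_pos _).le
      have hFn : IntegrableOn (fun t => ‖F t‖) (Icc (-Real.pi) Real.pi) := hFi.norm
      apply setIntegral_mono_set hFn
        (Filter.Eventually.of_forall fun t => norm_nonneg _)
        (HasSubset.Subset.eventuallyLE hmid_sub)
    have hYbound := hY₀ u (le_trans (le_max_right _ _) hy)
    -- kernel lower bound
    have hs8 : (0:ℝ) < Real.sqrt (8 * Real.pi * u) := Real.sqrt_pos.2 (by positivity)
    have hKlow : Real.exp (Real.pi * u) / Real.sqrt (8 * Real.pi * u) ≤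
        Real.sqrt (pwKernelDiag y) := by
      have h1 := pwK_lower (y := y) (hu ▸ hu1)
      rw [← hu] at h1
      have h2 : Real.sqrt (Real.exp (2 * Real.pi * u) / (8 * Real.pi * u)) =
          Real.exp (Real.pi * u) / Real.sqrt (8 * Real.pi * u) := by
        rw [Real.sqrt_div (Real.exp_pos _).le]
        congr 1
        rw [show Real.exp (2 * Real.pi * u) = (Real.exp (Real.pi * u)) ^ 2 by
          rw [sq, ← Real.exp_add]; ring_nf]
        exact Real.sqrt_sq (Real.exp_pos _).le
      rw [← h2]
      exact Real.sqrt_le_sqrt h1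
    have heq : M₁ * Real.exp (u * (Real.pi - δ)) =
        (M₁ * Real.sqrt (8 * Real.pi * u) * Real.exp (-(δ * u))) *
          (Real.exp (Real.pi * u) / Real.sqrt (8 * Real.pi * u)) := by
      rw [show u * (Real.pi - δ) = Real.pi * u + -(δ * u) by ring, Real.exp_add]
      field_simp
    calc (∫ t in mid, ‖F t‖ * Real.exp (y * t))
        ≤ M₁ * Real.exp (u * (Real.pi - δ)) := hstep1.trans hstep2
      _ = (M₁ * Real.sqrt (8 * Real.pi * u) * Real.exp (-(δ * u))) *
          (Real.exp (Real.pi * u) / Real.sqrt (8 * Real.pi * u)) := heq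
      _ ≤ (ε * Real.pi) * Real.sqrt (pwKernelDiag y) := by
          apply mul_le_mul hYbound.le hKlow (by positivity) (by positivity)
  linarith [hsplit, htail, hmid_est]

lemma pw_norm (F : ℝ → ℂ) (z : ℂ) :
    ‖pwTransform F z‖ = (1 / (2 * Real.pi)) *
      ‖∫ t in Icc (-Real.pi) Real.pi, F t * Complex.exp (-Complex.I * z * t)‖ := by
  rw [pwTransform, norm_smul, Real.norm_eq_abs,
    abs_of_pos (by positivity : (0:ℝ) < 1 / (2 * Real.pi))]

lemma pw_abs (F : ℝ → ℂ) (z : ℂ) :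
    ‖pwTransform F z‖ ≤ (1 / (2 * Real.pi)) *
      ∫ t in Icc (-Real.pi) Real.pi, ‖F t‖ * Real.exp (z.im * t) := by
  rw [pw_norm]
  apply mul_le_mul_of_nonneg_left _ (by positivity)
  calc ‖∫ t in Icc (-Real.pi) Real.pi, F t * Complex.exp (-Complex.I * z * t)‖
      ≤ ∫ t in Icc (-Real.pi) Real.pi, ‖F t * Complex.exp (-Complex.I * z * t)‖ :=
        norm_integral_le_integral_norm _
    _ = ∫ t in Icc (-Real.pi) Real.pi, ‖F t‖ * Real.exp (z.im * t) := by
        apply integral_congr_ae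
        apply Filter.Eventually.of_forall
        intro t
        show ‖F t * Complex.exp (-Complex.I * z * t)‖ = ‖F t‖ * Real.exp (z.im * t)
        simp only [norm_mul, Complex.norm_exp]
        congr 2
        simp [Complex.mul_re, Complex.mul_im]

lemma neg_I_mul (z : ℂ) (t : ℝ) :
    -Complex.I * z * t = ((z.im : ℂ) - Complex.I * z.re) * t := by
  congr 1
  apply Complex.ext <;> simp

theorem stmt12 (F : ℝ → ℂ)
    (hF : MemLp F 2 (volume.restrict (Set.Icc (-Real.pi) Real.pi))) :
    Filter.Tendsto
      (fun z : ℂ => ‖pwTransform F z‖ / Real.sqrt (pwKernelDiag z.im))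
      (Filter.comap (fun z : ℂ => ‖z‖) Filter.atTop) (nhds 0) := by
  have hFi : IntegrableOn F (Icc (-Real.pi) Real.pi) := hF.integrable one_le_two
  rw [Metric.tendsto_nhds]
  intro ε hε
  obtain ⟨Y, hY1, hYb⟩ := largeY hF (half_pos hε)
  obtain ⟨R, hR⟩ := grid_lemma hFi Y (by linarith) (show (0:ℝ) < ε * Real.pi by positivity)
  set R₀ : ℝ := |R| + Y + 1 with hR₀
  rw [Filter.eventually_comap]
  filter_upwards [Filter.eventually_ge_atTop R₀] with r hr z hz
  have habsz : R₀ ≤ ‖z‖ := by rw [hz]; exact hr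
  -- key bound
  have hKpos := pwK_pos z.im
  have hsqK : 0 < Real.sqrt (pwKernelDiag z.im) := Real.sqrt_pos.2 hKpos
  have hsqK1 : 1 ≤ Real.sqrt (pwKernelDiag z.im) := pwK_sqrt_one_le z.im
  have key : ‖pwTransform F z‖ < ε * Real.sqrt (pwKernelDiag z.im) := by
    rcases le_or_gt Y |z.im| with hcase | hcase
    · -- large imaginary part
      calc ‖pwTransform F z‖
          ≤ (1 / (2 * Real.pi)) *
            ∫ t in Icc (-Real.pi) Real.pi, ‖F t‖ * Real.exp (z.im * t) := pw_abs F z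
        _ ≤ (1 / (2 * Real.pi)) *
            ((ε / 2) * (2 * Real.pi) * Real.sqrt (pwKernelDiag z.im)) := by
            apply mul_le_mul_of_nonneg_left (hYb z.im hcase) (by positivity)
        _ = (ε / 2) * Real.sqrt (pwKernelDiag z.im) := by
            field_simp
        _ < ε * Real.sqrt (pwKernelDiag z.im) := by
            apply mul_lt_mul_of_pos_right _ hsqK
            linarith
    · -- bounded imaginary part, large real part
      have hre : R ≤ |z.re| := by
        have h1 : ‖z‖ ≤ |z.re| + |z.im| := Complex.norm_le_abs_re_add_abs_im z
        have h2 := le_abs_self R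
        linarith
      have hgrid := hR z.re z.im hre hcase.le
      calc ‖pwTransform F z‖
          = (1 / (2 * Real.pi)) *
            ‖∫ t in Icc (-Real.pi) Real.pi, F t * Complex.exp (-Complex.I * z * t)‖ :=
            pw_norm F z
        _ = (1 / (2 * Real.pi)) *
            ‖∫ t in Icc (-Real.pi) Real.pi,
              F t * Complex.exp (((z.im : ℂ) - Complex.I * z.re) * t)‖ := by
            congr 2
            apply integral_congr_ae
            apply Filter.Eventually.of_forall
            intro t
            simp only [neg_I_mul]
        _ < (1 / (2 * Real.pi)) * (ε * Real.pi) := by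
            apply mul_lt_mul_of_pos_left hgrid (by positivity)
        _ = ε / 2 := by field_simp
        _ ≤ (ε / 2) * Real.sqrt (pwKernelDiag z.im) := by
            nlinarith [hsqK1, hε]
        _ < ε * Real.sqrt (pwKernelDiag z.im) := by
            apply mul_lt_mul_of_pos_right _ hsqK
            linarith
  rw [Real.dist_eq, sub_zero, abs_of_nonneg (div_nonneg (norm_nonneg _) hsqK.le)]
  rw [div_lt_iff₀ hsqK]
  exact key
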